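/- arXiv:1302.1340 — 2 statements merged into one kernel-verified Lean document; each statement's English description precedes it below -/
import Mathlib

section
/- For every x ∈ X, the family 𝒜ₓ = {X(f,r) : f ∈ F, f(x) = 0, r > 0} is a filter base on X; the filter on X generated by 𝒜ₓ equals the neighborhood filter N_F(x) of x in the topology τ(F), and N_F(x) is an F-ultrafilter on X. -/
open Set

variable {X : Type*} [Nonempty X] [TopologicalSpace X] [DiscreteTopology X]

/-- The set `X(f,r) = {x ∈ X : |f(x)| ≤ r}`. -/
def XSet (f : BoundedContinuousFunction X ℂ) (r : ℝ) : Set X := {x | ‖f x‖ ≤ r}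

/-- An `F`-family on `X`: a nonempty collection of nonempty subsets of `X` such that for every
member `A ≠ X` there are `B` in the collection and `f ∈ F` with `f(B) = {0}`,
`f(X \ A) = {1}`. -/
def FFamily (F : StarSubalgebra ℂ (BoundedContinuousFunction X ℂ)) (𝒜 : Set (Set X)) : Prop :=
  𝒜.Nonempty ∧ (∀ A ∈ 𝒜, A.Nonempty) ∧
    ∀ A ∈ 𝒜, A ≠ Set.univ →
      ∃ B ∈ 𝒜, ∃ f ∈ F, (∀ x ∈ B, f x = 0) ∧ ∀ x ∉ A, f x = 1

/-- A filter on the set `X`, viewed as a collection of subsets. -/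
def IsSetFilter (φ : Set (Set X)) : Prop :=
  φ.Nonempty ∧ (∀ A ∈ φ, ∀ B ∈ φ, A ∩ B ∈ φ) ∧
    (∀ A ∈ φ, ∀ B : Set X, A ⊆ B → B ∈ φ) ∧ ∅ ∉ φ

/-- An `F`-filter on `X` is a filter which is also an `F`-family. -/
def FFilter (F : StarSubalgebra ℂ (BoundedContinuousFunction X ℂ)) (φ : Set (Set X)) : Prop :=
  IsSetFilter φ ∧ FFamily F φ

/-- An `F`-ultrafilter on `X` is an `F`-filter maximal with respect to inclusion. -/
def FUltrafilter (F : StarSubalgebra ℂ (BoundedContinuousFunction X ℂ)) (φ : Set (Set X)) : Prop :=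
  FFilter F φ ∧ ∀ ψ : Set (Set X), FFilter F ψ → φ ⊆ ψ → ψ = φ

/-- `F₀ = {f ∈ F : X(f,r) ≠ ∅ for all r > 0}`. -/
def FZero (F : StarSubalgebra ℂ (BoundedContinuousFunction X ℂ)) :
    Set (BoundedContinuousFunction X ℂ) :=
  {f | f ∈ F ∧ ∀ r : ℝ, 0 < r → (XSet f r).Nonempty}

/-- `Z(A) = {f ∈ F : f(x) = 0 for all x ∈ A}`. -/
def ZSet (F : StarSubalgebra ℂ (BoundedContinuousFunction X ℂ)) (A : Set X) :
    Set (BoundedContinuousFunction X ℂ) :=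
  {f | f ∈ F ∧ ∀ x ∈ A, f x = 0}

/-- The finite intersection property. -/
def FIP (𝒜 : Set (Set X)) : Prop :=
  ∀ s : Finset (Set X), ↑s ⊆ 𝒜 → s.Nonempty → (⋂₀ (s : Set (Set X))).Nonempty

/-- A filter base on `X`. -/
def IsFilterBase (ℬ : Set (Set X)) : Prop :=
  ℬ.Nonempty ∧ ∅ ∉ ℬ ∧ ∀ A ∈ ℬ, ∀ B ∈ ℬ, ∃ C ∈ ℬ, C ⊆ A ∩ B

/-- The filter generated by a filter base. -/
def genFilter (ℬ : Set (Set X)) : Set (Set X) :=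
  {A | ∃ B ∈ ℬ, B ⊆ A}

/-- `δX`, the space of all `F`-ultrafilters on `X`. -/
def Delta (F : StarSubalgebra ℂ (BoundedContinuousFunction X ℂ)) : Type _ :=
  {p : Set (Set X) // FUltrafilter F p}

/-- `Â = {p ∈ δX : A ∈ p}`. -/
def hatSet (F : StarSubalgebra ℂ (BoundedContinuousFunction X ℂ)) (A : Set X) :
    Set (Delta F) :=
  {p | A ∈ p.1}

/-- The topology on `δX` having `{Â : A ⊆ X}` as a base. -/
instance (F : StarSubalgebra ℂ (BoundedContinuousFunction X ℂ)) :
    TopologicalSpace (Delta F) :=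
  TopologicalSpace.generateFrom {S | ∃ A : Set X, S = hatSet F A}

/-- For an `F`-filter `φ`, `φ̂ = {p ∈ δX : φ ⊆ p}`. -/
def hatF (F : StarSubalgebra ℂ (BoundedContinuousFunction X ℂ)) (φ : Set (Set X)) :
    Set (Delta F) :=
  {p | φ ⊆ p.1}

/-- `τ(F)`, the weakest topology on `X` making every member of `F` continuous. -/
noncomputable def tauF (F : StarSubalgebra ℂ (BoundedContinuousFunction X ℂ)) : TopologicalSpace X :=
  ⨅ f ∈ (F : Set (BoundedContinuousFunction X ℂ)),
    TopologicalSpace.induced (fun x => f x) inferInstance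

/-- `B(I) = {X(f,r) : f ∈ I, r > 0}` for an ideal `I` of `F`. -/
def BIdeal (F : StarSubalgebra ℂ (BoundedContinuousFunction X ℂ)) (I : Ideal F) :
    Set (Set X) :=
  {S | ∃ f ∈ I, ∃ r : ℝ, 0 < r ∧ S = XSet (f : BoundedContinuousFunction X ℂ) r}

section Helpers
open Polynomial
set_option linter.unusedSectionVars false


noncomputable def evalAH (x : X) : BoundedContinuousFunction X ℂ →ₐ[ℂ] ℂ where
  toFun f := f x
  map_one' := rfl
  map_mul' _ _ := rfl
  map_zero' := rfl
  map_add' _ _ := rfl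
  commutes' _ := rfl

lemma starmul_apply (g : BoundedContinuousFunction X ℂ) (y : X) :
    (star g * g) y = ((‖g y‖^2 : ℝ) : ℂ) := by
  rw [BoundedContinuousFunction.mul_apply, BoundedContinuousFunction.star_apply,
    Complex.star_def, ← Complex.normSq_eq_conj_mul_self, Complex.normSq_eq_norm_sq]

/-- membership via polynomial approximation -/
lemma mem_of_polyapprox (F : StarSubalgebra ℂ (BoundedContinuousFunction X ℂ))
    (hF : IsClosed (F : Set (BoundedContinuousFunction X ℂ)))
    {h : BoundedContinuousFunction X ℂ} (hh : h ∈ F) (f : BoundedContinuousFunction X ℂ)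
    (happ : ∀ ε : ℝ, 0 < ε → ∃ p : ℂ[X], ‖f - aeval h p‖ ≤ ε) : f ∈ F := by
  have : f ∈ closure (F : Set (BoundedContinuousFunction X ℂ)) := by
    rw [Metric.mem_closure_iff]
    intro ε hε
    obtain ⟨p, hp⟩ := happ (ε/2) (by linarith)
    refine ⟨aeval h p, ?_, ?_⟩
    · have : aeval h p ∈ Algebra.adjoin ℂ ({h} : Set (BoundedContinuousFunction X ℂ)) :=
        aeval_mem_adjoin_singleton ℂ h
      have hle : Algebra.adjoin ℂ ({h} : Set (BoundedContinuousFunction X ℂ)) ≤ F.toSubalgebra :=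
        Algebra.adjoin_le (by simpa using hh)
      exact hle this
    · rw [dist_eq_norm]; linarith
  rwa [hF.closure_eq] at this

lemma phi_props (a b : ℝ) (hab : a < b) :
    ∃ φ : ℝ → ℝ, Continuous φ ∧ (∀ t, |φ t| ≤ 1) ∧ (∀ t, t ≤ a → φ t = 0) ∧
      (∀ t, b ≤ t → φ t = 1) := by
  refine ⟨fun t => max 0 (min 1 ((t - a)/(b - a))), by fun_prop, ?_, ?_, ?_⟩
  · intro t
    rw [abs_le]
    constructor
    · exact le_trans (by norm_num) (le_max_left _ _)
    · exact max_le (by norm_num) (min_le_left _ _)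
  · intro t ht
    have : (t - a)/(b-a) ≤ 0 := div_nonpos_of_nonpos_of_nonneg (by linarith) (by linarith)
    show max 0 (min 1 ((t - a)/(b - a))) = 0
    rw [max_eq_left (le_trans (min_le_right _ _) this)]
  · intro t ht
    have h1 : (1:ℝ) ≤ (t - a)/(b-a) := (le_div_iff₀ (by linarith)).2 (by linarith)
    show max 0 (min 1 ((t - a)/(b - a))) = 1
    rw [min_eq_left h1, max_eq_right (by norm_num)]

lemma construction (F : StarSubalgebra ℂ (BoundedContinuousFunction X ℂ))
    (hF : IsClosed (F : Set (BoundedContinuousFunction X ℂ)))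
    {g : BoundedContinuousFunction X ℂ} (hg : g ∈ F) {a b : ℝ} (hab : a < b) :
    ∃ f ∈ F, (∀ y, ‖g y‖^2 ≤ a → f y = 0) ∧ (∀ y, b ≤ ‖g y‖^2 → f y = 1) := by
  obtain ⟨φ, φcont, φbd, φ0, φ1⟩ := phi_props a b hab
  set f : BoundedContinuousFunction X ℂ :=
    BoundedContinuousFunction.ofNormedAddCommGroupDiscrete
      (fun y => ((φ (‖g y‖^2) : ℝ) : ℂ)) 1
      (fun y => by simpa [Complex.norm_real] using φbd (‖g y‖^2)) with hfdef
  have hfapp : ∀ y, f y = ((φ (‖g y‖^2) : ℝ) : ℂ) := fun y => rfl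
  set h : BoundedContinuousFunction X ℂ := star g * g with hhdef
  have hhF : h ∈ F := mul_mem (star_mem hg) hg
  set M : ℝ := ‖g‖^2 with hM
  have hM0 : (0:ℝ) ≤ M := by positivity
  have htmem : ∀ y, ‖g y‖^2 ∈ Set.Icc 0 M := by
    intro y
    refine ⟨by positivity, ?_⟩
    have := g.norm_coe_le_norm y
    have h0 := norm_nonneg (g y)
    nlinarith
  refine ⟨f, ?_, fun y hy => by rw [hfapp, φ0 _ hy, Complex.ofReal_zero],
    fun y hy => by rw [hfapp, φ1 _ hy, Complex.ofReal_one]⟩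
  apply mem_of_polyapprox F hF hhF
  intro ε hε
  -- Stone–Weierstrass on [0, M]
  set φc : C(Set.Icc (0:ℝ) M, ℝ) := ⟨fun t => φ t.1, φcont.comp continuous_subtype_val⟩ with hφc
  have hdense : φc ∈ closure ((polynomialFunctions (Set.Icc (0:ℝ) M)) :
      Set C(Set.Icc (0:ℝ) M, ℝ)) := by
    have htop := polynomialFunctions_closure_eq_top (0:ℝ) M
    have h1 : φc ∈ (polynomialFunctions (Set.Icc (0:ℝ) M)).topologicalClosure := by
      rw [htop]; trivial
    exact h1
  obtain ⟨q, hq, hqd⟩ := Metric.mem_closure_iff.mp hdense ε hε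
  rw [polynomialFunctions_coe] at hq
  obtain ⟨p, rfl⟩ := hq
  refine ⟨p.map (algebraMap ℝ ℂ), ?_⟩
  rw [BoundedContinuousFunction.norm_le hε.le]
  intro y
  have hval : (aeval h (p.map (algebraMap ℝ ℂ))) y = ((p.eval (‖g y‖^2) : ℝ) : ℂ) := by
    have h1 : evalAH y (aeval h (p.map (algebraMap ℝ ℂ))) =
        aeval (h y) (p.map (algebraMap ℝ ℂ)) := (aeval_algHom_apply (evalAH y) h _).symm
    have h2 : (evalAH y) (aeval h (p.map (algebraMap ℝ ℂ))) =
        (aeval h (p.map (algebraMap ℝ ℂ))) y := rfl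
    rw [← h2, h1, coe_aeval_eq_eval, starmul_apply, eval_map,
      ← Complex.coe_algebraMap, eval₂_at_apply]
  rw [BoundedContinuousFunction.sub_apply, hval, hfapp, ← Complex.ofReal_sub,
    Complex.norm_real]
  have hdd : dist (φc ⟨‖g y‖^2, htmem y⟩)
      ((Polynomial.toContinuousMapOnAlgHom (Set.Icc (0:ℝ) M) p) ⟨‖g y‖^2, htmem y⟩) ≤
      dist φc (Polynomial.toContinuousMapOnAlgHom (Set.Icc (0:ℝ) M) p) :=
    ContinuousMap.dist_apply_le_dist _
  have : (Polynomial.toContinuousMapOnAlgHom (Set.Icc (0:ℝ) M) p) ⟨‖g y‖^2, htmem y⟩ =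
      p.eval (‖g y‖^2) := rfl
  rw [this] at hdd
  have : φc ⟨‖g y‖^2, htmem y⟩ = φ (‖g y‖^2) := rfl
  rw [this] at hdd
  rw [Real.dist_eq] at hdd
  exact le_of_lt (lt_of_le_of_lt hdd hqd) |>.trans (le_refl ε)

end Helpers

theorem stmt6 (F : StarSubalgebra ℂ (BoundedContinuousFunction X ℂ)) (hF : IsClosed (F : Set (BoundedContinuousFunction X ℂ))) (x : X) :
    IsFilterBase {S | ∃ f ∈ F, f x = 0 ∧ ∃ r : ℝ, 0 < r ∧ S = XSet f r} ∧
    genFilter {S | ∃ f ∈ F, f x = 0 ∧ ∃ r : ℝ, 0 < r ∧ S = XSet f r} =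
      {A : Set X | A ∈ @nhds X (tauF F) x} ∧
    FUltrafilter F {A : Set X | A ∈ @nhds X (tauF F) x} := by
  set ℬ : Set (Set X) := {S | ∃ f ∈ F, f x = 0 ∧ ∃ r : ℝ, 0 < r ∧ S = XSet f r} with hBdef
  set φ : Set (Set X) := {A : Set X | A ∈ @nhds X (tauF F) x} with hφdef
  have memnhds : ∀ (t : TopologicalSpace X) (U : Set X), @IsOpen X t U → x ∈ U →
      U ∈ @nhds X t x := fun t U hU hx => by
    letI := t; exact hU.mem_nhds hx
  have memof : ∀ (t : TopologicalSpace X) (U : Set X), U ∈ @nhds X t x → x ∈ U :=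
    fun t U h => by letI := t; exact mem_of_mem_nhds h
  have hxmem : ∀ S ∈ ℬ, x ∈ S := by
    rintro S ⟨f, hf, hfx, r, hr, rfl⟩
    show ‖f x‖ ≤ r
    rw [hfx, norm_zero]; exact hr.le
  -- the norm computation for star f * f + star g * g
  have hsum : ∀ f g : BoundedContinuousFunction X ℂ, ∀ y : X,
      ‖(star f * f + star g * g) y‖ = ‖f y‖^2 + ‖g y‖^2 := by
    intro f g y
    rw [BoundedContinuousFunction.add_apply, starmul_apply, starmul_apply,
      ← Complex.ofReal_add, Complex.norm_real, Real.norm_eq_abs, abs_of_nonneg (by positivity)]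
  have hbase : IsFilterBase ℬ := by
    refine ⟨⟨XSet (0 : BoundedContinuousFunction X ℂ) 1, 0, zero_mem F, rfl, 1, one_pos, rfl⟩,
      fun hemp => absurd (hxmem ∅ hemp) (Set.notMem_empty x), ?_⟩
    rintro A ⟨f, hf, hfx, r, hr, rfl⟩ B ⟨g, hg, hgx, s, hs, rfl⟩
    refine ⟨XSet (star f * f + star g * g) (min r s ^ 2),
      ⟨star f * f + star g * g,
        add_mem (mul_mem (star_mem hf) hf) (mul_mem (star_mem hg) hg), ?_,
        min r s ^ 2, by positivity, rfl⟩, ?_⟩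
    · rw [BoundedContinuousFunction.add_apply, starmul_apply, starmul_apply, hfx, hgx]
      norm_num
    · intro y hy
      have h1 : ‖f y‖^2 + ‖g y‖^2 ≤ min r s ^ 2 := by
        have := hy; change ‖(star f * f + star g * g) y‖ ≤ min r s ^ 2 at this
        calc ‖f y‖^2 + ‖g y‖^2 = ‖(star f * f + star g * g) y‖ := (hsum f g y).symm
        _ ≤ min r s ^ 2 := this
      have hminr : min r s ≤ r := min_le_left r s
      have hmins : min r s ≤ s := min_le_right r s
      have hmin0 : 0 ≤ min r s := le_min hr.le hs.le
      constructor
      · show ‖f y‖ ≤ r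
        nlinarith [norm_nonneg (f y), norm_nonneg (g y)]
      · show ‖g y‖ ≤ s
        nlinarith [norm_nonneg (f y), norm_nonneg (g y)]
  -- opens of tauF
  have hopen : ∀ g : BoundedContinuousFunction X ℂ, g ∈ F → ∀ U : Set ℂ, IsOpen U →
      @IsOpen X (tauF F) ((fun z => g z) ⁻¹' U) := by
    intro g hg U hU
    have hle : tauF F ≤ TopologicalSpace.induced (fun z => g z) inferInstance := by
      rw [tauF]
      exact iInf₂_le g hg
    exact (@isOpen_induced X ℂ _ (fun z => g z) U hU).mono hle
  have hgensub : genFilter ℬ ⊆ φ := by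
    rintro A ⟨S, ⟨g, hg, hgx, r, hr, rfl⟩, hSA⟩
    show A ∈ @nhds X (tauF F) x
    have hU : @IsOpen X (tauF F) ((fun z => g z) ⁻¹' Metric.ball 0 r) :=
      hopen g hg _ Metric.isOpen_ball
    have hxU : x ∈ (fun z => g z) ⁻¹' Metric.ball 0 r := by
      show g x ∈ Metric.ball (0:ℂ) r
      rw [Metric.mem_ball, hgx, dist_self]; exact hr
    refine Filter.mem_of_superset (memnhds (tauF F) _ hU hxU) ?_
    intro y hy
    apply hSA
    show ‖g y‖ ≤ r
    have : dist (g y) 0 < r := Metric.mem_ball.mp hy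
    rw [dist_zero_right] at this
    exact this.le
  have h2 : @nhds X (tauF F) x = ⨅ f : (F : Set (BoundedContinuousFunction X ℂ)),
      Filter.comap (fun z => (f : BoundedContinuousFunction X ℂ) z)
        (nhds ((f : BoundedContinuousFunction X ℂ) x)) := by
    have h1 : tauF F = ⨅ f : (F : Set (BoundedContinuousFunction X ℂ)),
        TopologicalSpace.induced (fun z => (f : BoundedContinuousFunction X ℂ) z)
          inferInstance := by
      rw [tauF, iInf_subtype]
    rw [h1, nhds_iInf]
    exact iInf_congr fun f => nhds_induced _ x
  have key : ∀ f w : BoundedContinuousFunction X ℂ,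
      (∀ y, ‖f y - f x‖ ^ 2 ≤ ‖w y‖) → w x = 0 →
      Filter.comap (fun z => w z) (nhds (w x)) ≤ Filter.comap (fun z => f z) (nhds (f x)) := by
    intro f w hw hwx S hS
    obtain ⟨T, hT, hTS⟩ := Filter.mem_comap.mp hS
    obtain ⟨ε, hε, hball⟩ := Metric.mem_nhds_iff.mp hT
    refine Filter.mem_comap.mpr ⟨Metric.ball 0 (ε^2), ?_, ?_⟩
    · rw [hwx]; exact Metric.ball_mem_nhds 0 (by positivity)
    · intro y hy
      apply hTS
      show f y ∈ T
      apply hball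
      rw [Metric.mem_ball, dist_eq_norm]
      have h3 : ‖w y‖ < ε^2 := by
        have := Set.mem_preimage.mp hy
        rwa [Metric.mem_ball, dist_zero_right] at this
      nlinarith [hw y, norm_nonneg (f y - f x), norm_nonneg (w y)]
  haveI : Nonempty (F : Set (BoundedContinuousFunction X ℂ)) :=
    ⟨⟨0, SetLike.mem_coe.mpr (zero_mem F)⟩⟩
  have hsubapp : ∀ f : BoundedContinuousFunction X ℂ, ∀ y,
      (f - f x • (1 : BoundedContinuousFunction X ℂ)) y = f y - f x := by
    intro f y
    rw [BoundedContinuousFunction.sub_apply, BoundedContinuousFunction.smul_apply]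
    simp
  have hdir : Directed (· ≥ ·) (fun f : (F : Set (BoundedContinuousFunction X ℂ)) =>
      Filter.comap (fun z => (f : BoundedContinuousFunction X ℂ) z)
        (nhds ((f : BoundedContinuousFunction X ℂ) x))) := by
    rintro ⟨f, hf⟩ ⟨g, hg⟩
    set u := f - f x • (1 : BoundedContinuousFunction X ℂ) with hu
    set v := g - g x • (1 : BoundedContinuousFunction X ℂ) with hv
    have huF : u ∈ F := sub_mem hf (SMulMemClass.smul_mem _ (one_mem F))
    have hvF : v ∈ F := sub_mem hg (SMulMemClass.smul_mem _ (one_mem F))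
    set w := star u * u + star v * v with hw
    have hwF : w ∈ F := add_mem (mul_mem (star_mem huF) huF) (mul_mem (star_mem hvF) hvF)
    have hwnorm : ∀ y, ‖w y‖ = ‖u y‖^2 + ‖v y‖^2 := hsum u v
    have hux : ∀ y, u y = f y - f x := hsubapp f
    have hvx : ∀ y, v y = g y - g x := hsubapp g
    have hwx : w x = 0 := by
      rw [hw, BoundedContinuousFunction.add_apply, starmul_apply, starmul_apply, hux, hvx]
      simp
    refine ⟨⟨w, SetLike.mem_coe.mpr hwF⟩, ?_, ?_⟩
    · apply key
      · intro y
        rw [hwnorm y, ← hux y]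
        nlinarith [norm_nonneg (v y)]
      · exact hwx
    · apply key
      · intro y
        rw [hwnorm y, ← hvx y]
        nlinarith [norm_nonneg (u y)]
      · exact hwx
  have hgen : genFilter ℬ = φ := by
    apply Set.Subset.antisymm hgensub
    intro A hA
    have hA' : A ∈ @nhds X (tauF F) x := hA
    rw [h2, Filter.mem_iInf_of_directed hdir] at hA'
    obtain ⟨⟨f, hf⟩, hAf⟩ := hA'
    obtain ⟨T, hT, hTS⟩ := Filter.mem_comap.mp hAf
    obtain ⟨ε, hε, hball⟩ := Metric.mem_nhds_iff.mp hT
    set g := f - f x • (1 : BoundedContinuousFunction X ℂ) with hg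
    have hgF : g ∈ F := sub_mem (SetLike.mem_coe.mp hf) (SMulMemClass.smul_mem _ (one_mem F))
    have hgx : g x = 0 := by rw [hsubapp f x]; ring
    refine ⟨XSet g (ε/2), ⟨g, hgF, hgx, ε/2, by positivity, rfl⟩, ?_⟩
    intro y hy
    apply hTS
    show f y ∈ T
    apply hball
    rw [Metric.mem_ball, dist_eq_norm]
    have : ‖g y‖ ≤ ε/2 := hy
    rw [hsubapp f y] at this
    linarith
  refine ⟨hbase, hgen, ?_, ?_⟩
  · -- FFilter
    constructor
    · -- IsSetFilter
      refine ⟨⟨Set.univ, Filter.univ_mem⟩, ?_, ?_, ?_⟩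
      · intro A hA B hB; exact Filter.inter_mem hA hB
      · intro A hA B hAB; exact Filter.mem_of_superset hA hAB
      · intro hemp
        exact absurd (memof (tauF F) ∅ hemp) (Set.notMem_empty x)
    · -- FFamily
      refine ⟨⟨Set.univ, Filter.univ_mem⟩, ?_, ?_⟩
      · intro A hA
        exact ⟨x, memof (tauF F) A hA⟩
      · intro A hA _
        have hA' : A ∈ genFilter ℬ := by rw [hgen]; exact hA
        obtain ⟨S, ⟨g, hg, hgx, r, hr, rfl⟩, hSA⟩ := hA'
        obtain ⟨f, hfF, hf0, hf1⟩ := construction F hF hg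
          (show r^2/2 < r^2 by nlinarith)
        refine ⟨XSet g (r/2), ?_, f, hfF, ?_, ?_⟩
        · rw [← hgen]
          exact ⟨XSet g (r/2), ⟨g, hg, hgx, r/2, by positivity, rfl⟩, subset_rfl⟩
        · intro y hy
          apply hf0
          have : ‖g y‖ ≤ r/2 := hy
          nlinarith [norm_nonneg (g y)]
        · intro y hy
          apply hf1
          have : ¬ (‖g y‖ ≤ r) := fun hc => hy (hSA hc)
          push_neg at this
          nlinarith [norm_nonneg (g y)]
  · -- maximality
    intro ψ hψ hφψ
    apply Set.Subset.antisymm ?_ hφψ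
    intro A hA
    by_cases hAuniv : A = Set.univ
    · rw [hAuniv]; exact Filter.univ_mem
    obtain ⟨B, hBψ, f, hfF, hfB, hfA⟩ := hψ.2.2.2 A hA hAuniv
    have hfx : f x = 0 := by
      by_contra hfx
      have hnorm : 0 < ‖f x‖ := norm_pos_iff.mpr hfx
      set U : Set X := (fun z => f z) ⁻¹' Metric.ball (f x) ‖f x‖ with hU
      have hUopen : @IsOpen X (tauF F) U := hopen f hfF _ Metric.isOpen_ball
      have hxU : x ∈ U := by
        show f x ∈ Metric.ball (f x) ‖f x‖
        rw [Metric.mem_ball, dist_self]; exact hnorm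
      have hUφ : U ∈ φ := memnhds (tauF F) _ hUopen hxU
      have hBU : B ∩ U ∈ ψ := hψ.1.2.1 B hBψ U (hφψ hUφ)
      have hne : (B ∩ U).Nonempty := by
        rcases Set.eq_empty_or_nonempty (B ∩ U) with hc | hc
        · exact absurd (hc ▸ hBU) hψ.1.2.2.2
        · exact hc
      obtain ⟨y, hyB, hyU⟩ := hne
      have h1 : f y = 0 := hfB y hyB
      have h2 : dist (f y) (f x) < ‖f x‖ := Metric.mem_ball.mp hyU
      rw [h1, dist_eq_norm, zero_sub, norm_neg] at h2
      exact lt_irrefl _ h2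
    have hsub : XSet f (1/2) ⊆ A := by
      intro y hy
      by_contra hyA
      have : f y = 1 := hfA y hyA
      have : ‖f y‖ ≤ 1/2 := hy
      rw [hfA y hyA] at this
      norm_num at this
    have : A ∈ genFilter ℬ :=
      ⟨XSet f (1/2), ⟨f, hfF, hfx, 1/2, by norm_num, rfl⟩, hsub⟩
    rw [hgen] at this
    exact this
end

section
/- Let A and B be non-empty subsets of X. Then X(f,r) ∩ X(g,r) ≠ ∅ for all f ∈ Z(A), g ∈ Z(B), and r > 0 if and only if the closures of e(A) and of e(B) in δX have non-empty intersection. -/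
open Set

variable {X : Type*} [Nonempty X] [TopologicalSpace X] [DiscreteTopology X]

section Aux

open BoundedContinuousFunction

/-- The cutoff function: `0` for `|z| ≤ s/2`, `1` for `|z| ≥ s`. -/
noncomputable def cutFun (s : ℝ) : ℂ → ℂ := fun z =>
  ((min 1 (max 0 (2 * ‖z‖ / s - 1)) : ℝ) : ℂ)

lemma cutFun_continuous (s : ℝ) : Continuous (cutFun s) := by
  apply Complex.continuous_ofReal.comp
  exact continuous_const.min (continuous_const.max
    (((continuous_norm.const_smul (2:ℝ)).div_const s).sub continuous_const))

lemma cutFun_continuous' (s : ℝ) : Continuous (cutFun s) := by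
  unfold cutFun
  fun_prop

lemma cutFun_eq_zero {s : ℝ} (hs : 0 < s) {z : ℂ} (hz : ‖z‖ ≤ s / 2) : cutFun s z = 0 := by
  have h1 : 2 * ‖z‖ / s - 1 ≤ 0 := by
    have : 2 * ‖z‖ ≤ s := by linarith
    have := div_le_one_of_le₀ this hs.le
    linarith
  have h : max 0 (2 * ‖z‖ / s - 1) = 0 := max_eq_left h1
  simp [cutFun, h]

lemma cutFun_eq_one {s : ℝ} (hs : 0 < s) {z : ℂ} (hz : s ≤ ‖z‖) : cutFun s z = 1 := by
  have h1 : (1:ℝ) ≤ 2 * ‖z‖ / s - 1 := by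
    have : 2 * s ≤ 2 * ‖z‖ := by linarith
    have h2 : (2:ℝ) ≤ 2 * ‖z‖ / s := by
      rw [le_div_iff₀ hs]; linarith
    linarith
  have h0 : max 0 (2 * ‖z‖ / s - 1) = 2 * ‖z‖ / s - 1 := max_eq_right (by linarith)
  have h : min 1 (max 0 (2 * ‖z‖ / s - 1)) = 1 := by rw [h0]; exact min_eq_left h1
  simp [cutFun, h]

end Aux
open Topology

section Helpers

variable {F : StarSubalgebra ℂ (BoundedContinuousFunction X ℂ)}

lemma FFilter.univ_mem {p : Set (Set X)} (hp : FFilter F p) : Set.univ ∈ p := by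
  obtain ⟨A, hA⟩ := hp.1.1
  exact hp.1.2.2.1 A hA Set.univ (Set.subset_univ A)

lemma FFilter.mem_nonempty {p : Set (Set X)} (hp : FFilter F p) {C : Set X} (hC : C ∈ p) :
    C.Nonempty := hp.2.2.1 C hC

lemma FFilter.inter_mem {p : Set (Set X)} (hp : FFilter F p) {C D : Set X}
    (hC : C ∈ p) (hD : D ∈ p) : C ∩ D ∈ p := hp.1.2.1 C hC D hD

lemma FFilter.mem_of_superset {p : Set (Set X)} (hp : FFilter F p) {C D : Set X}
    (hC : C ∈ p) (hCD : C ⊆ D) : D ∈ p := hp.1.2.2.1 C hC D hCD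

/-- Characterization of closure in `Delta F` via the basic open sets. -/
lemma mem_closure_iff_hat (p : Delta F) (S : Set (Delta F)) :
    p ∈ closure S ↔ ∀ C : Set X, C ∈ p.1 → (hatSet F C ∩ S).Nonempty := by
  constructor
  · intro h C hC
    have hopen : IsOpen (hatSet F C) :=
      TopologicalSpace.isOpen_generateFrom_of_mem ⟨C, rfl⟩
    exact mem_closure_iff.mp h _ hopen hC
  · intro h
    rw [mem_closure_iff]
    intro U hU hpU
    have hU' : TopologicalSpace.GenerateOpen {S | ∃ A : Set X, S = hatSet F A} U := hU
    have aux : ∀ V : Set (Delta F),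
        TopologicalSpace.GenerateOpen {S | ∃ A : Set X, S = hatSet F A} V →
        ∀ q : Delta F, q ∈ V → ∃ C : Set X, C ∈ q.1 ∧ hatSet F C ⊆ V := by
      intro V hV
      induction hV with
      | basic s hs =>
        obtain ⟨C, rfl⟩ := hs
        exact fun q hq => ⟨C, hq, subset_rfl⟩
      | univ =>
        exact fun q _ => ⟨Set.univ, q.2.1.univ_mem, Set.subset_univ _⟩
      | inter s t _ _ ihs iht =>
        intro q hq
        obtain ⟨C1, hC1, hC1s⟩ := ihs q hq.1
        obtain ⟨C2, hC2, hC2t⟩ := iht q hq.2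
        refine ⟨C1 ∩ C2, q.2.1.inter_mem hC1 hC2, fun r hr => ?_⟩
        have h1 : C1 ∈ r.1 := r.2.1.mem_of_superset hr Set.inter_subset_left
        have h2 : C2 ∈ r.1 := r.2.1.mem_of_superset hr Set.inter_subset_right
        exact ⟨hC1s h1, hC2t h2⟩
      | sUnion 𝒮 _ ih =>
        intro q hq
        obtain ⟨s, hs𝒮, hqs⟩ := hq
        obtain ⟨C, hC, hCs⟩ := ih s hs𝒮 q hqs
        exact ⟨C, hC, hCs.trans (Set.subset_sUnion_of_mem hs𝒮)⟩
    obtain ⟨C, hC, hCU⟩ := aux U hU' p hpU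
    obtain ⟨q, hq1, hq2⟩ := h C hC
    exact ⟨q, hCU hq1, hq2⟩

/-- Members of `F` are `τ(F)`-continuous. -/
lemma tauF_continuous {f : BoundedContinuousFunction X ℂ} (hf : f ∈ F) :
    @Continuous X ℂ (tauF F) _ (fun x => f x) := by
  rw [@continuous_iff_le_induced X ℂ (fun x => f x) (tauF F) _]
  exact iInf_le_of_le f (iInf_le _ hf)

lemma tauF_ball_mem_nhds {f : BoundedContinuousFunction X ℂ} (hf : f ∈ F) {x : X} {r : ℝ}
    (hx : ‖f x‖ < r) : {y : X | ‖f y‖ < r} ∈ @nhds X (tauF F) x := by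
  have hopen : IsOpen[tauF F] {y : X | ‖f y‖ < r} := by
    have heq : {y : X | ‖f y‖ < r} = (fun y => f y) ⁻¹' Metric.ball 0 r := by
      ext y; simp [mem_ball_zero_iff]
    rw [heq]
    exact @Continuous.isOpen_preimage X ℂ (tauF F) _ (fun y => f y) (tauF_continuous hf) _
      Metric.isOpen_ball
  exact @IsOpen.mem_nhds X (tauF F) _ _ hopen hx

end Helpers
open BoundedContinuousFunction in
/-- Continuous functional calculus via Stone-Weierstrass. -/
lemma comp_mem_of_continuous (F : StarSubalgebra ℂ (BoundedContinuousFunction X ℂ))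
    (hF : IsClosed (F : Set (BoundedContinuousFunction X ℂ)))
    (f : BoundedContinuousFunction X ℂ) (hf : f ∈ F) (χ : ℂ → ℂ) (hχ : Continuous χ) :
    ∃ g ∈ F, ∀ x, g x = χ (f x) := by
  set K : Set ℂ := Metric.closedBall 0 ‖f‖ with hK
  haveI : CompactSpace K := isCompact_iff_compactSpace.mp (isCompact_closedBall _ _)
  have hιmem : ∀ x : X, f x ∈ K := fun x => by
    simpa [hK, mem_closedBall_zero_iff] using f.norm_coe_le_norm x
  let ι : X → K := fun x => ⟨f x, hιmem x⟩
  let Φ : C(K, ℂ) → BoundedContinuousFunction X ℂ := fun u =>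
    ofNormedAddCommGroupDiscrete (fun x => u (ι x)) ‖u‖ (fun x => u.norm_coe_le_norm (ι x))
  have hΦapp : ∀ u x, Φ u x = u (ι x) := fun u x => rfl
  have hΦlip : LipschitzWith 1 Φ := by
    refine LipschitzWith.of_dist_le_mul fun u v => ?_
    rw [NNReal.coe_one, one_mul]
    refine (BoundedContinuousFunction.dist_le dist_nonneg).mpr fun x => ?_
    simpa [hΦapp] using ContinuousMap.dist_apply_le_dist (f := u) (g := v) (ι x)
  let Φh : C(K, ℂ) →⋆ₐ[ℂ] (BoundedContinuousFunction X ℂ) :=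
    { toFun := Φ
      map_one' := by ext x; simp [hΦapp]
      map_mul' := fun u v => by ext x; simp [hΦapp]
      map_zero' := by ext x; simp [hΦapp]
      map_add' := fun u v => by ext x; simp [hΦapp]
      commutes' := fun c => by ext x; simp [hΦapp]
      map_star' := fun u => by ext x; simp [hΦapp] }
  let S : StarSubalgebra ℂ C(K, ℂ) := F.comap Φh
  have hScar : ∀ u : C(K, ℂ), u ∈ S ↔ Φ u ∈ F := fun u => Iff.rfl
  have hSclosed : IsClosed (S : Set C(K, ℂ)) := hF.preimage hΦlip.continuous
  have hSsep : S.SeparatesPoints := by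
    intro z w hzw
    refine ⟨_, ⟨(⟨fun z => (z : ℂ), continuous_subtype_val⟩ : C(K, ℂ)), ?_, rfl⟩, ?_⟩
    · show Φ _ ∈ F
      have : Φ (⟨fun z => (z : ℂ), continuous_subtype_val⟩ : C(K, ℂ)) = f := by
        ext x; simp [hΦapp, ι]
      rwa [this]
    · simpa [Subtype.coe_injective.ne_iff] using hzw
  have htop := ContinuousMap.starSubalgebra_topologicalClosure_eq_top_of_separatesPoints S hSsep
  have hS : ∀ u : C(K, ℂ), u ∈ S := by
    intro u
    have h1 : u ∈ (S.topologicalClosure : Set C(K, ℂ)) := by rw [htop]; trivial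
    rw [StarSubalgebra.topologicalClosure_coe, hSclosed.closure_eq] at h1
    exact h1
  refine ⟨Φ ⟨fun z => χ z, hχ.comp continuous_subtype_val⟩, hS _, fun x => rfl⟩
section Core

variable {F : StarSubalgebra ℂ (BoundedContinuousFunction X ℂ)}

lemma combo_apply (a b : BoundedContinuousFunction X ℂ) (x : X) :
    (a + b - a * b) x = a x + b x - a x * b x := by
  simp

lemma combo_zero {a b : BoundedContinuousFunction X ℂ} {x : X} (ha : a x = 0) (hb : b x = 0) :
    (a + b - a * b) x = 0 := by rw [combo_apply, ha, hb]; ring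

lemma combo_one {a b : BoundedContinuousFunction X ℂ} {x : X} (h : a x = 1 ∨ b x = 1) :
    (a + b - a * b) x = 1 := by
  rw [combo_apply]; rcases h with h | h <;> rw [h] <;> ring

lemma exists_fultrafilter_ge {φ : Set (Set X)} (hφ : FFilter F φ) :
    ∃ p : Set (Set X), FUltrafilter F p ∧ φ ⊆ p := by
  have hH : ∀ c ⊆ {ψ : Set (Set X) | FFilter F ψ}, IsChain (· ⊆ ·) c → c.Nonempty →
      ∃ ub ∈ {ψ : Set (Set X) | FFilter F ψ}, ∀ s ∈ c, s ⊆ ub := by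
    intro c hcS hchain hcne
    obtain ⟨ψ0, hψ0⟩ := hcne
    refine ⟨⋃₀ c, ?_, fun s hs => Set.subset_sUnion_of_mem hs⟩
    have hmem : ∀ {T ψ}, ψ ∈ c → T ∈ ψ → T ∈ ⋃₀ c := fun hψ hT => ⟨_, hψ, hT⟩
    refine ⟨⟨⟨Set.univ, hmem hψ0 (hcS hψ0).univ_mem⟩, ?_, ?_, ?_⟩, ?_, ?_, ?_⟩
    · rintro T1 ⟨ψ1, hψ1, hT1⟩ T2 ⟨ψ2, hψ2, hT2⟩
      rcases eq_or_ne ψ1 ψ2 with rfl | hne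
      · exact hmem hψ1 ((hcS hψ1).inter_mem hT1 hT2)
      · rcases hchain hψ1 hψ2 hne with h | h
        · exact hmem hψ2 ((hcS hψ2).inter_mem (h hT1) hT2)
        · exact hmem hψ1 ((hcS hψ1).inter_mem hT1 (h hT2))
    · rintro T ⟨ψ, hψ, hT⟩ T2 hTT2
      exact hmem hψ ((hcS hψ).mem_of_superset hT hTT2)
    · rintro ⟨ψ, hψ, hT⟩
      exact (hcS hψ).1.2.2.2 hT
    · exact ⟨Set.univ, hmem hψ0 (hcS hψ0).univ_mem⟩
    · rintro T ⟨ψ, hψ, hT⟩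
      exact (hcS hψ).mem_nonempty hT
    · rintro T ⟨ψ, hψ, hT⟩ hTuniv
      obtain ⟨B, hB, f, hfF, h0, h1⟩ := (hcS hψ).2.2.2 T hT hTuniv
      exact ⟨B, hmem hψ hB, f, hfF, h0, h1⟩
  obtain ⟨m, hφm, hm⟩ := zorn_subset_nonempty {ψ : Set (Set X) | FFilter F ψ} hH φ hφ
  exact ⟨m, ⟨hm.1, fun ψ hψ hmψ => Set.Subset.antisymm (hm.2 hψ hmψ) hmψ⟩, hφm⟩

/-- If `p` lies in the closure of `e '' A` then `X(f,r) ∈ p` for all `f ∈ Z(A)`, `r > 0`. -/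
lemma XSet_mem_of_mem_closure (hF : IsClosed (F : Set (BoundedContinuousFunction X ℂ)))
    {e : X → Delta F} (he : ∀ x : X, (e x).1 = {A : Set X | A ∈ @nhds X (tauF F) x})
    {A : Set X} {p : Delta F} (hp : p ∈ closure (e '' A))
    {f : BoundedContinuousFunction X ℂ} (hf : f ∈ ZSet F A) {r : ℝ} (hr : 0 < r) :
    XSet f r ∈ p.1 := by
  have meets : ∀ C ∈ p.1, ∀ s : ℝ, 0 < s → (C ∩ XSet f s).Nonempty := by
    intro C hC s hs
    obtain ⟨q, hqhat, x, hxA, hex⟩ := (mem_closure_iff_hat p _).mp hp C hC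
    have hCex : C ∈ (e x).1 := by rw [hex]; exact hqhat
    rw [he x] at hCex
    have hxC : x ∈ C := @mem_of_mem_nhds X (tauF F) x C hCex
    exact ⟨x, hxC, by simp [XSet, hf.2 x hxA, hs.le]⟩
  set ℬ : Set (Set X) := {T | ∃ C ∈ p.1, ∃ s : ℝ, 0 < s ∧ T = C ∩ XSet f s} with hℬdef
  have base_mem : ∀ C ∈ p.1, ∀ s : ℝ, 0 < s → C ∩ XSet f s ∈ genFilter ℬ :=
    fun C hC s hs => ⟨_, ⟨C, hC, s, hs, rfl⟩, subset_rfl⟩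
  have hpsub : p.1 ⊆ genFilter ℬ := fun C hC =>
    ⟨C ∩ XSet f 1, ⟨C, hC, 1, one_pos, rfl⟩, Set.inter_subset_left⟩
  have hXmono : ∀ s t : ℝ, s ≤ t → XSet f s ⊆ XSet f t := fun s t h x hx => le_trans hx h
  have hbase_ne : ∀ T ∈ genFilter ℬ, T.Nonempty := by
    rintro T ⟨_, ⟨C, hC, s, hs, rfl⟩, hsub⟩
    exact (meets C hC s hs).mono hsub
  have hψfilter : FFilter F (genFilter ℬ) := by
    refine ⟨⟨⟨_, hpsub (p.2.1.univ_mem)⟩, ?_, ?_, ?_⟩, ⟨_, hpsub (p.2.1.univ_mem)⟩, hbase_ne, ?_⟩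
    · rintro T1 ⟨_, ⟨C1, hC1, s1, hs1, rfl⟩, hsub1⟩ T2 ⟨_, ⟨C2, hC2, s2, hs2, rfl⟩, hsub2⟩
      refine ⟨(C1 ∩ C2) ∩ XSet f (min s1 s2),
        ⟨C1 ∩ C2, p.2.1.inter_mem hC1 hC2, min s1 s2, lt_min hs1 hs2, rfl⟩, fun x hx => ?_⟩
      exact ⟨hsub1 ⟨hx.1.1, hXmono _ _ (min_le_left _ _) hx.2⟩,
        hsub2 ⟨hx.1.2, hXmono _ _ (min_le_right _ _) hx.2⟩⟩
    · rintro T ⟨S, hS, hST⟩ T2 hTT2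
      exact ⟨S, hS, hST.trans hTT2⟩
    · intro h
      exact Set.not_nonempty_empty (hbase_ne _ h)
    · rintro T ⟨_, ⟨C, hC, s, hs, rfl⟩, hsub⟩ hTuniv
      obtain ⟨hfn, hfnF, hfnval⟩ := comp_mem_of_continuous F hF f hf.1 (cutFun s)
        (cutFun_continuous s)
      have hfn0 : ∀ x ∈ XSet f (s / 2), hfn x = 0 := fun x hx => by
        rw [hfnval]; exact cutFun_eq_zero hs hx
      have hfn1 : ∀ x ∉ XSet f s, hfn x = 1 := fun x hx => by
        rw [hfnval]; exact cutFun_eq_one hs (le_of_not_ge hx)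
      by_cases hCuniv : C = Set.univ
      · refine ⟨Set.univ ∩ XSet f (s / 2), base_mem _ (p.2.1.univ_mem) _ (half_pos hs),
          hfn, hfnF, fun x hx => hfn0 x hx.2, fun x hx => ?_⟩
        refine hfn1 x fun hxs => hx (hsub ⟨?_, hxs⟩)
        rw [hCuniv]; trivial
      · obtain ⟨D, hD, hC0, hC0F, hC0zero, hC0one⟩ := p.2.1.2.2.2 C hC hCuniv
        refine ⟨D ∩ XSet f (s / 2), base_mem D hD _ (half_pos hs),
          hC0 + hfn - hC0 * hfn, ?_, fun x hx => combo_zero (hC0zero x hx.1) (hfn0 x hx.2),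
          fun x hx => ?_⟩
        · exact sub_mem (add_mem hC0F hfnF) (mul_mem hC0F hfnF)
        · by_cases hxC : x ∈ C
          · refine combo_one (Or.inr (hfn1 x fun hxs => hx (hsub ⟨hxC, hxs⟩)))
          · exact combo_one (Or.inl (hC0one x hxC))
  have hψeq := p.2.2 (genFilter ℬ) hψfilter hpsub
  rw [← hψeq]
  exact ⟨Set.univ ∩ XSet f r, ⟨Set.univ, p.2.1.univ_mem, r, hr, rfl⟩, Set.inter_subset_right⟩

/-- If `X(k,1/2) ∈ P` for every `k ∈ Z(A)`, then `P` lies in the closure of `e '' A`. -/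
lemma mem_closure_image' (hF : IsClosed (F : Set (BoundedContinuousFunction X ℂ)))
    {e : X → Delta F} (he : ∀ x : X, (e x).1 = {A : Set X | A ∈ @nhds X (tauF F) x})
    {A : Set X} (hA : A.Nonempty) (P : Delta F)
    (hmem : ∀ k ∈ ZSet F A, XSet k (1/2) ∈ P.1) : P ∈ closure (e '' A) := by
  rw [mem_closure_iff_hat]
  intro C hC
  by_cases hCuniv : C = Set.univ
  · obtain ⟨x, hx⟩ := hA
    refine ⟨e x, ?_, Set.mem_image_of_mem e hx⟩
    show C ∈ (e x).1
    rw [he x, hCuniv]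
    exact Filter.univ_mem
  · obtain ⟨D, hD, h, hhF, hzero, hone⟩ := P.2.1.2.2.2 C hC hCuniv
    have hx : ∃ x ∈ A, ‖h x‖ < 1/2 := by
      by_contra hcon
      push_neg at hcon
      obtain ⟨k, hkF, hkval⟩ := comp_mem_of_continuous F hF h hhF
        (fun z => 1 - cutFun (1/2) z) (continuous_const.sub (cutFun_continuous _))
      have hkZ : k ∈ ZSet F A := ⟨hkF, fun x hxA => by
        rw [hkval, cutFun_eq_one (by norm_num) (hcon x hxA)]; ring⟩
      have hint : (D ∩ XSet k (1/2)).Nonempty :=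
        P.2.1.mem_nonempty (P.2.1.inter_mem hD (hmem k hkZ))
      obtain ⟨y, hyD, hyk⟩ := hint
      have hky : k y = 1 := by
        rw [hkval, hzero y hyD, cutFun_eq_zero (by norm_num : (0:ℝ) < 1/2) (by norm_num)]
        ring
      have : ‖k y‖ ≤ 1/2 := hyk
      rw [hky] at this
      norm_num at this
    obtain ⟨x, hxA, hxh⟩ := hx
    refine ⟨e x, ?_, Set.mem_image_of_mem e hxA⟩
    show C ∈ (e x).1
    rw [he x]
    have hU := tauF_ball_mem_nhds hhF (x := x) (r := 1/2) hxh
    refine Filter.mem_of_superset hU ?_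
    intro y hy
    by_contra hyC
    rw [Set.mem_setOf_eq, hone y hyC] at hy
    norm_num at hy

end Core
theorem stmt9 (F : StarSubalgebra ℂ (BoundedContinuousFunction X ℂ)) (hF : IsClosed (F : Set (BoundedContinuousFunction X ℂ))) (e : X → Delta F) (he : ∀ x : X, (e x).1 = {A : Set X | A ∈ @nhds X (tauF F) x})
    (A B : Set X) (hA : A.Nonempty) (hB : B.Nonempty) :
    (∀ f ∈ ZSet F A, ∀ g ∈ ZSet F B, ∀ r : ℝ, 0 < r →
        (XSet f r ∩ XSet g r).Nonempty) ↔
      (closure (e '' A) ∩ closure (e '' B)).Nonempty := by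
  constructor
  · intro H
    set ℬ : Set (Set X) := {T | ∃ f ∈ ZSet F A, ∃ g ∈ ZSet F B,
      ∃ r : ℝ, 0 < r ∧ T = XSet f r ∩ XSet g r} with hℬdef
    have hzeroA : (0 : BoundedContinuousFunction X ℂ) ∈ ZSet F A :=
      ⟨zero_mem F, fun x _ => rfl⟩
    have hzeroB : (0 : BoundedContinuousFunction X ℂ) ∈ ZSet F B :=
      ⟨zero_mem F, fun x _ => rfl⟩
    have base_mem : ∀ f ∈ ZSet F A, ∀ g ∈ ZSet F B, ∀ r : ℝ, 0 < r →
        XSet f r ∩ XSet g r ∈ genFilter ℬ :=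
      fun f hf g hg r hr => ⟨_, ⟨f, hf, g, hg, r, hr, rfl⟩, subset_rfl⟩
    have hne : ∀ T ∈ genFilter ℬ, T.Nonempty := by
      rintro T ⟨_, ⟨f, hf, g, hg, r, hr, rfl⟩, hsub⟩
      exact (H f hf g hg r hr).mono hsub
    have huniv : Set.univ ∈ genFilter ℬ :=
      ⟨_, ⟨0, hzeroA, 0, hzeroB, 1, one_pos, rfl⟩, Set.subset_univ _⟩
    have habs : ∀ (f : BoundedContinuousFunction X ℂ) (C : Set X), f ∈ ZSet F C →
        ∃ a, a ∈ ZSet F C ∧ ∀ x, a x = ((‖f x‖ : ℝ) : ℂ) := by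
      intro f C hfC
      obtain ⟨a, haF, ha⟩ := comp_mem_of_continuous F hF f hfC.1 (fun z => ((‖z‖ : ℝ) : ℂ))
        (Complex.continuous_ofReal.comp continuous_norm)
      exact ⟨a, ⟨haF, fun x hx => by rw [ha, hfC.2 x hx]; simp⟩, ha⟩
    have hφ : FFilter F (genFilter ℬ) := by
      refine ⟨⟨⟨_, huniv⟩, ?_, ?_, ?_⟩, ⟨_, huniv⟩, hne, ?_⟩
      · rintro T1 ⟨_, ⟨f1, hf1, g1, hg1, r1, hr1, rfl⟩, h1⟩
          T2 ⟨_, ⟨f2, hf2, g2, hg2, r2, hr2, rfl⟩, h2⟩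
        obtain ⟨a1, ha1Z, ha1⟩ := habs f1 A hf1
        obtain ⟨a2, ha2Z, ha2⟩ := habs f2 A hf2
        obtain ⟨b1, hb1Z, hb1⟩ := habs g1 B hg1
        obtain ⟨b2, hb2Z, hb2⟩ := habs g2 B hg2
        set m := min r1 r2 with hm
        have hsumval : ∀ (a1 a2 : BoundedContinuousFunction X ℂ)
            (f1 f2 : BoundedContinuousFunction X ℂ),
            (∀ x, a1 x = ((‖f1 x‖ : ℝ) : ℂ)) → (∀ x, a2 x = ((‖f2 x‖ : ℝ) : ℂ)) →
            ∀ x ∈ XSet (a1 + a2) m, ‖f1 x‖ ≤ m ∧ ‖f2 x‖ ≤ m := by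
          intro a1 a2 f1 f2 ha1 ha2 x hx
          have hval : (a1 + a2) x = ((‖f1 x‖ + ‖f2 x‖ : ℝ) : ℂ) := by
            simp [ha1 x, ha2 x]
          have hnorm : ‖(a1 + a2) x‖ = ‖f1 x‖ + ‖f2 x‖ := by
            rw [hval, Complex.norm_real, Real.norm_eq_abs,
              abs_of_nonneg (add_nonneg (norm_nonneg _) (norm_nonneg _))]
          have hle : ‖f1 x‖ + ‖f2 x‖ ≤ m := by rw [← hnorm]; exact hx
          constructor <;> nlinarith [norm_nonneg (f1 x), norm_nonneg (f2 x)]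
        have haZ : a1 + a2 ∈ ZSet F A :=
          ⟨add_mem ha1Z.1 ha2Z.1, fun x hx => by
            simp [ha1Z.2 x hx, ha2Z.2 x hx]⟩
        have hbZ : b1 + b2 ∈ ZSet F B :=
          ⟨add_mem hb1Z.1 hb2Z.1, fun x hx => by
            simp [hb1Z.2 x hx, hb2Z.2 x hx]⟩
        refine ⟨XSet (a1 + a2) m ∩ XSet (b1 + b2) m,
          ⟨a1 + a2, haZ, b1 + b2, hbZ, m, lt_min hr1 hr2, rfl⟩, fun x hx => ?_⟩
        obtain ⟨hxf1, hxf2⟩ := hsumval a1 a2 f1 f2 ha1 ha2 x hx.1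
        obtain ⟨hxg1, hxg2⟩ := hsumval b1 b2 g1 g2 hb1 hb2 x hx.2
        exact ⟨h1 ⟨hxf1.trans (min_le_left _ _), hxg1.trans (min_le_left _ _)⟩,
          h2 ⟨hxf2.trans (min_le_right _ _), hxg2.trans (min_le_right _ _)⟩⟩
      · rintro T ⟨S, hS, hST⟩ T2 hTT2
        exact ⟨S, hS, hST.trans hTT2⟩
      · intro h
        exact Set.not_nonempty_empty (hne _ h)
      · rintro T ⟨_, ⟨f, hf, g, hg, r, hr, rfl⟩, hsub⟩ hTuniv
        obtain ⟨hfn, hfnF, hfnval⟩ := comp_mem_of_continuous F hF f hf.1 (cutFun r)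
          (cutFun_continuous r)
        obtain ⟨hgn, hgnF, hgnval⟩ := comp_mem_of_continuous F hF g hg.1 (cutFun r)
          (cutFun_continuous r)
        refine ⟨XSet f (r/2) ∩ XSet g (r/2), base_mem f hf g hg _ (half_pos hr),
          hfn + hgn - hfn * hgn, sub_mem (add_mem hfnF hgnF) (mul_mem hfnF hgnF),
          fun x hx => combo_zero (by rw [hfnval]; exact cutFun_eq_zero hr hx.1)
            (by rw [hgnval]; exact cutFun_eq_zero hr hx.2), fun x hx => ?_⟩
        by_cases hxf : x ∈ XSet f r
        · have hxg : x ∉ XSet g r := fun hxg => hx (hsub ⟨hxf, hxg⟩)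
          exact combo_one (Or.inr (by rw [hgnval]; exact cutFun_eq_one hr (le_of_not_ge hxg)))
        · exact combo_one (Or.inl (by rw [hfnval]; exact cutFun_eq_one hr (le_of_not_ge hxf)))
    obtain ⟨m, hult, hφm⟩ := exists_fultrafilter_ge hφ
    refine ⟨⟨m, hult⟩, mem_closure_image' hF he hA _ fun k hk => ?_,
      mem_closure_image' hF he hB _ fun k hk => ?_⟩
    · exact hφm ⟨XSet k (1/2) ∩ XSet 0 (1/2),
        ⟨k, hk, 0, hzeroB, 1/2, by norm_num, rfl⟩, Set.inter_subset_left⟩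
    · exact hφm ⟨XSet 0 (1/2) ∩ XSet k (1/2),
        ⟨0, hzeroA, k, hk, 1/2, by norm_num, rfl⟩, Set.inter_subset_right⟩
  · rintro ⟨p, hpA, hpB⟩ f hf g hg r hr
    have hXf : XSet f r ∈ p.1 := XSet_mem_of_mem_closure hF he hpA hf hr
    obtain ⟨q, hqhat, x, hxB, hex⟩ := (mem_closure_iff_hat p _).mp hpB _ hXf
    have hXex : XSet f r ∈ (e x).1 := by rw [hex]; exact hqhat
    rw [he x] at hXex
    have hxX : x ∈ XSet f r := @mem_of_mem_nhds X (tauF F) x _ hXex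
    exact ⟨x, hxX, by simp [XSet, hg.2 x hxB, hr.le]⟩
end
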